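/- Let S be a finite set of size N, ρ : S → ℝ nonnegative, 1 ≤ p ≤ N, and B a uniformly random p-subset of S. Then the variance of the estimator ρ̃ = (N/p) Σ_{j∈B} ρ(j) is bounded by ((N−p)/p) · (Σ_{j∈S} ρ(j))². -/

import Mathlib

open Finset

lemma count_containing {α : Type*} [DecidableEq α] (S : Finset α) (p : ℕ) (hp : 1 ≤ p)
    (j : α) (hj : j ∈ S) :
    ((S.powersetCard p).filter (fun B => j ∈ B)).card = (S.card - 1).choose (p - 1) := by
  rw [← card_erase_of_mem hj, ← card_powersetCard]
  apply card_bij (fun B _ => B.erase j)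
  · intro B hB
    simp only [mem_filter, mem_powersetCard] at hB
    rw [mem_powersetCard]
    exact ⟨erase_subset_erase _ hB.1.1, by rw [card_erase_of_mem hB.2, hB.1.2]⟩
  · intro B hB B' hB' h
    simp only [mem_filter] at hB hB'
    rw [← insert_erase hB.2, ← insert_erase hB'.2, h]
  · intro B hB
    rw [mem_powersetCard] at hB
    refine ⟨insert j B, ?_, ?_⟩
    · simp only [mem_filter, mem_powersetCard]
      have hjB : j ∉ B := fun h => (notMem_erase j S) (hB.1 h)
      refine ⟨⟨insert_subset hj (hB.1.trans (erase_subset _ _)), ?_⟩, mem_insert_self _ _⟩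
      rw [card_insert_of_notMem hjB, hB.2]
      omega
    · rw [erase_insert (fun h => (notMem_erase j S) (hB.1 h))]

lemma sum_sum_powersetCard {α : Type*} [DecidableEq α] (S : Finset α) (p : ℕ) (hp : 1 ≤ p)
    (ρ : α → ℝ) :
    ∑ B ∈ S.powersetCard p, ∑ j ∈ B, ρ j
      = ((S.card - 1).choose (p - 1) : ℝ) * ∑ j ∈ S, ρ j := by
  have h1 : ∀ B ∈ S.powersetCard p, ∑ j ∈ B, ρ j
      = ∑ j ∈ S, if j ∈ B then ρ j else 0 := by
    intro B hB
    rw [mem_powersetCard] at hB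
    rw [sum_ite_mem, inter_comm, (inter_eq_left).2 hB.1]
  rw [sum_congr rfl h1, Finset.sum_comm]
  rw [Finset.mul_sum]
  apply sum_congr rfl
  intro j hj
  rw [← sum_filter, sum_const, count_containing S p hp j hj, nsmul_eq_mul]

/-- For nonnegative `ρ`, the variance of the random batch estimator
`ρ̃ = (N/p) ∑_{j∈B} ρ j` is bounded by `((N−p)/p) (∑_{j∈S} ρ j)²`. -/
theorem stmt_4 {α : Type*} [DecidableEq α] (S : Finset α) (N p : ℕ)
    (hN : S.card = N) (hN2 : 2 ≤ N) (hp1 : 1 ≤ p) (hpN : p ≤ N)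
    (ρ : α → ℝ) (hρ : ∀ j ∈ S, 0 ≤ ρ j) :
    (∑ B ∈ S.powersetCard p, (((N : ℝ) / (p : ℝ)) * ∑ j ∈ B, ρ j) ^ 2) /
        ((S.powersetCard p).card : ℝ)
      - ((∑ B ∈ S.powersetCard p, ((N : ℝ) / (p : ℝ)) * ∑ j ∈ B, ρ j) /
          ((S.powersetCard p).card : ℝ)) ^ 2
      ≤ (((N : ℝ) - (p : ℝ)) / (p : ℝ)) * (∑ j ∈ S, ρ j) ^ 2 := by
  set T : ℝ := ∑ j ∈ S, ρ j with hT
  have hq : (0:ℝ) < (p:ℝ) := by exact_mod_cast hp1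
  have hn : (0:ℝ) < (N:ℝ) := by positivity
  have hC : (S.powersetCard p).card = N.choose p := by
    rw [card_powersetCard, hN]
  have hCpos : (0:ℝ) < ((S.powersetCard p).card : ℝ) := by
    rw [hC]
    exact_mod_cast Nat.choose_pos hpN
  set c : ℝ := ((S.powersetCard p).card : ℝ) with hc
  -- key choose identity: N * (N-1).choose (p-1) = p * N.choose p
  have hkey : N * (N - 1).choose (p - 1) = p * N.choose p := by
    have := Nat.add_one_mul_choose_eq (N - 1) (p - 1)
    have h1 : N - 1 + 1 = N := by omega
    have h2 : p - 1 + 1 = p := by omega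
    simp only [Nat.succ_eq_add_one, h1, h2] at this
    rw [this, Nat.mul_comm]
  set m : ℝ := ((N - 1).choose (p - 1) : ℝ) with hm
  have hkeyR : (N:ℝ) * m = (p:ℝ) * c := by
    rw [hm, hc, hC]
    exact_mod_cast hkey
  have hsum : ∑ B ∈ S.powersetCard p, ∑ j ∈ B, ρ j = m * T := by
    rw [sum_sum_powersetCard S p hp1 ρ, hN]
  have hTnn : 0 ≤ T := sum_nonneg hρ
  -- mean equals T
  have hmean : (∑ B ∈ S.powersetCard p, ((N : ℝ) / (p : ℝ)) * ∑ j ∈ B, ρ j) = c * T := by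
    rw [← mul_sum, hsum]
    field_simp
    nlinarith [hkeyR]
  -- second moment bound
  have hB_le : ∀ B ∈ S.powersetCard p, (0 ≤ ∑ j ∈ B, ρ j) ∧ (∑ j ∈ B, ρ j) ≤ T := by
    intro B hB
    rw [mem_powersetCard] at hB
    constructor
    · exact sum_nonneg fun j hj => hρ j (hB.1 hj)
    · exact sum_le_sum_of_subset_of_nonneg hB.1 fun j hj _ => hρ j hj
  have hsq : ∑ B ∈ S.powersetCard p, (((N : ℝ) / (p : ℝ)) * ∑ j ∈ B, ρ j) ^ 2
      ≤ ((N:ℝ) / (p:ℝ)) * c * T ^ 2 := by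
    have step : ∑ B ∈ S.powersetCard p, (((N : ℝ) / (p : ℝ)) * ∑ j ∈ B, ρ j) ^ 2
        ≤ ∑ B ∈ S.powersetCard p, ((N:ℝ)/(p:ℝ))^2 * T * ∑ j ∈ B, ρ j := by
      apply sum_le_sum
      intro B hB
      obtain ⟨h0, h1⟩ := hB_le B hB
      have : (∑ j ∈ B, ρ j) ^ 2 ≤ T * ∑ j ∈ B, ρ j := by nlinarith
      calc (((N : ℝ) / (p : ℝ)) * ∑ j ∈ B, ρ j) ^ 2
          = ((N:ℝ)/(p:ℝ))^2 * (∑ j ∈ B, ρ j)^2 := by ring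
        _ ≤ ((N:ℝ)/(p:ℝ))^2 * (T * ∑ j ∈ B, ρ j) := by
            apply mul_le_mul_of_nonneg_left this (by positivity)
        _ = ((N:ℝ)/(p:ℝ))^2 * T * ∑ j ∈ B, ρ j := by ring
    rw [← mul_sum, hsum] at step
    calc ∑ B ∈ S.powersetCard p, (((N : ℝ) / (p : ℝ)) * ∑ j ∈ B, ρ j) ^ 2
        ≤ ((N:ℝ)/(p:ℝ))^2 * T * (m * T) := step
      _ = ((N:ℝ) * m) * (N:ℝ) * T^2 / (p:ℝ)^2 := by ring
      _ = ((p:ℝ) * c) * (N:ℝ) * T^2 / (p:ℝ)^2 := by rw [hkeyR]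
      _ = ((N:ℝ) / (p:ℝ)) * c * T ^ 2 := by field_simp
  rw [hmean]
  have hmeansq : (c * T / c) ^ 2 = T ^ 2 := by
    rw [mul_div_cancel_left₀ _ (ne_of_gt hCpos)]
  rw [hmeansq]
  have : (∑ B ∈ S.powersetCard p, (((N : ℝ) / (p : ℝ)) * ∑ j ∈ B, ρ j) ^ 2) / c
      ≤ ((N:ℝ)/(p:ℝ)) * T^2 := by
    rw [div_le_iff₀ hCpos]
    calc _ ≤ ((N:ℝ) / (p:ℝ)) * c * T ^ 2 := hsq
      _ = (N:ℝ)/(p:ℝ) * T^2 * c := by ring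
  have hfin : ((N:ℝ)/(p:ℝ)) * T^2 - T^2 = (((N : ℝ) - (p : ℝ)) / (p : ℝ)) * T^2 := by
    field_simp
  linarith
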